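/- Let β be an alternating bicharacter of type I on a finite abelian group T. Then T is isomorphic to (ℤ₂ × ℤ₂)^m for some m ≥ 0, and there exists a symplectic basis {a₁, b₁, …, a_m, b_m} of T with respect to β. -/

import Mathlib

/-- An alternating bicharacter on a (multiplicative) finite abelian group `T`,
with values in `ℝˣ`. -/
def IsAltBichar {T : Type*} [CommGroup T] (β : T → T → ℝˣ) : Prop :=
  (∀ u v w : T, β (u * v) w = β u w * β v w) ∧
  (∀ u v w : T, β u (v * w) = β u v * β u w) ∧
  (∀ u : T, β u u = 1)

/-- A family `c : ι → T` is a basis of `T` if `T` is the internal direct product of the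
cyclic subgroups `⟨c i⟩`, i.e. the natural product map is bijective. -/
def IsBasisFamily {T : Type*} [CommGroup T] {ι : Type*} [Fintype ι] (c : ι → T) : Prop :=
  Function.Bijective (fun x : (∀ i : ι, Subgroup.zpowers (c i)) => ∏ i : ι, (x i : T))

/-- A family `a₁,b₁,…,a_m,b_m` is symplectic with respect to `β` if
`β(aᵢ,bᵢ) = β(bᵢ,aᵢ) = -1` and `β` takes the value `+1` on all other pairs. -/
def IsSymplecticFamily {T : Type*} [CommGroup T] (β : T → T → ℝˣ) {m : ℕ}
    (a b : Fin m → T) : Prop :=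
  (∀ i, β (a i) (b i) = -1 ∧ β (b i) (a i) = -1) ∧
  (∀ i j, β (a i) (a j) = 1) ∧ (∀ i j, β (b i) (b j) = 1) ∧
  (∀ i j, i ≠ j → β (a i) (b j) = 1 ∧ β (b i) (a j) = 1)

section Helpers
variable {T : Type*} [CommGroup T] {β : T → T → ℝˣ}

lemma neg_one_ne_one' : (-1 : ℝˣ) ≠ 1 := by
  intro h
  have := congrArg Units.val h
  norm_num at this

/-- `β u ·` as a monoid hom. -/
def chiR (hβ : IsAltBichar β) (u : T) : T →* ℝˣ where
  toFun := β u
  map_one' := by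
    have h := hβ.2.1 u 1 1
    rw [mul_one] at h
    exact (mul_eq_left.mp h.symm)
  map_mul' := fun v w => hβ.2.1 u v w

/-- `β · v` as a monoid hom. -/
def chiL (hβ : IsAltBichar β) (v : T) : T →* ℝˣ where
  toFun := fun u => β u v
  map_one' := by
    have h := hβ.1 1 1 v
    rw [mul_one] at h
    exact (mul_eq_left.mp h.symm)
  map_mul' := fun u w => hβ.1 u w v

lemma beta_one_right (hβ : IsAltBichar β) (u : T) : β u 1 = 1 := (chiR hβ u).map_one

lemma beta_one_left (hβ : IsAltBichar β) (v : T) : β 1 v = 1 := (chiL hβ v).map_one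

lemma beta_mul_symm (hβ : IsAltBichar β) (u v : T) : β u v * β v u = 1 := by
  have h := hβ.2.2 (u * v)
  rw [hβ.1 u v (u * v), hβ.2.1 u u v, hβ.2.1 v u v, hβ.2.2 u, hβ.2.2 v,
    one_mul, mul_one] at h
  exact h.symm ▸ h

lemma beta_pm [Fintype T] (hβ : IsAltBichar β) (u v : T) : β u v = 1 ∨ β u v = -1 := by
  have hn : v ^ Fintype.card T = 1 := pow_card_eq_one
  have h : β u v ^ Fintype.card T = 1 := by
    have := map_pow (chiR hβ u) v (Fintype.card T)
    simp only [chiR, MonoidHom.coe_mk, OneHom.coe_mk] at this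
    rw [← this, hn]; exact beta_one_right hβ u
  have h' : ((β u v : ℝˣ) : ℝ) ^ Fintype.card T = 1 := by
    have := congrArg Units.val h
    push_cast at this
    exact this
  rcases pow_eq_one_iff_cases.mp h' with h0 | h1 | h2
  · exact absurd h0 Fintype.card_ne_zero
  · left; exact Units.ext h1
  · right; exact Units.ext h2.1

lemma beta_symm [Fintype T] (hβ : IsAltBichar β) (u v : T) : β u v = β v u := by
  have hm := beta_mul_symm hβ u v
  rcases beta_pm hβ u v with h | h <;> rw [h] at hm ⊢
  · rw [one_mul] at hm; exact hm.symm
  · rw [neg_one_mul, neg_eq_iff_eq_neg] at hm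
    rw [hm]

lemma sq_one [Fintype T] (hβ : IsAltBichar β)
    (hI : ∀ t : T, (∀ u : T, β u t = 1) → t = 1) (t : T) : t ^ 2 = 1 := by
  apply hI
  intro u
  have : β u (t ^ 2) = β u t ^ 2 := map_pow (chiR hβ u) t 2
  rw [this]
  rcases beta_pm hβ u t with h | h <;> rw [h]
  · rw [one_pow]
  · rw [neg_one_sq]

end Helpers

lemma aux_cancel {T : Type*} [CommGroup T] (X t : T) (h : X * X = 1) :
    t = X * (t * X) := by
  rw [mul_comm X (t * X), mul_assoc, h, mul_one]

universe u

lemma key : ∀ (n : ℕ) (T : Type u) [CommGroup T] [Fintype T] (β : T → T → ℝˣ),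
    Fintype.card T ≤ n → IsAltBichar β → (∀ t : T, (∀ u : T, β u t = 1) → t = 1) →
    ∃ (m : ℕ) (a b : Fin m → T), IsSymplecticFamily β a b ∧
      ∀ t : T, ∃ f g : Fin m → ℕ, t = ∏ i, a i ^ f i * b i ^ g i := by
  intro n
  induction n with
  | zero =>
    intro T _ _ β hcard _ _
    have := Fintype.card_pos (α := T)
    omega
  | succ n ih =>
    intro T _ _ β hcard hβ hI
    classical
    by_cases hT : ∀ t : T, t = 1
    · refine ⟨0, Fin.elim0, Fin.elim0,
        ⟨fun i => i.elim0, fun i => i.elim0, fun i => i.elim0, fun i => i.elim0⟩, ?_⟩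
      intro t
      exact ⟨0, 0, by rw [hT t]; simp⟩
    · push_neg at hT
      obtain ⟨a, ha⟩ := hT
      have hrad : ¬ ∀ u : T, β u a = 1 := fun h => ha (hI a h)
      push_neg at hrad
      obtain ⟨b, hb⟩ := hrad
      have hba : β b a = -1 := (beta_pm hβ b a).resolve_left hb
      have hab : β a b = -1 := by rw [beta_symm hβ a b, hba]
      have haa : β a a = 1 := hβ.2.2 a
      have hbb : β b b = 1 := hβ.2.2 b
      let S : Subgroup T :=
        { carrier := {t | β a t = 1 ∧ β b t = 1}
          one_mem' := ⟨beta_one_right hβ a, beta_one_right hβ b⟩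
          mul_mem' := fun {x y} hx hy =>
            ⟨by rw [hβ.2.1, hx.1, hy.1, one_mul], by rw [hβ.2.1, hx.2, hy.2, one_mul]⟩
          inv_mem' := fun {x} hx => by
            constructor
            · have h := hβ.2.1 a x x⁻¹
              rw [mul_inv_cancel, beta_one_right hβ a, hx.1, one_mul] at h
              exact h.symm
            · have h := hβ.2.1 b x x⁻¹
              rw [mul_inv_cancel, beta_one_right hβ b, hx.2, one_mul] at h
              exact h.symm }
      have hSmem : ∀ t : T, t ∈ S ↔ β a t = 1 ∧ β b t = 1 := fun t => Iff.rfl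
      let β' : S → S → ℝˣ := fun s t => β s t
      have hβ' : IsAltBichar β' :=
        ⟨fun u v w => hβ.1 u v w, fun u v w => hβ.2.1 u v w, fun u => hβ.2.2 u⟩
      -- type I on S
      have ht1 : ∀ t : S, β a (t : T) = 1 := fun t => t.2.1
      have ht2 : ∀ t : S, β b (t : T) = 1 := fun t => t.2.2
      have hI' : ∀ t : S, (∀ u : S, β' u t = 1) → t = 1 := by
        intro t ht
        have htT : ∀ u : T, β u (t : T) = 1 := by
          intro u
          rcases beta_pm hβ a u with h1 | h1 <;> rcases beta_pm hβ b u with h2 | h2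
          · exact ht ⟨u, (hSmem u).mpr ⟨h1, h2⟩⟩
          · -- β a u = 1, β b u = -1 : correct by a
            have hw : u * a ∈ S := (hSmem _).mpr
              ⟨by rw [hβ.2.1, h1, haa, one_mul], by rw [hβ.2.1, h2, hba]; norm_num⟩
            have h := hβ.1 u a (t : T)
            rw [ht1 t, mul_one] at h
            rw [← h]
            exact ht ⟨u * a, hw⟩
          · have hw : u * b ∈ S := (hSmem _).mpr
              ⟨by rw [hβ.2.1, h1, hab]; norm_num, by rw [hβ.2.1, h2, hbb, one_mul]⟩
            have h := hβ.1 u b (t : T)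
            rw [ht2 t, mul_one] at h
            rw [← h]
            exact ht ⟨u * b, hw⟩
          · have hw : u * (a * b) ∈ S := (hSmem _).mpr
              ⟨by rw [hβ.2.1, hβ.2.1, h1, haa, hab]; norm_num,
               by rw [hβ.2.1, hβ.2.1, h2, hba, hbb]; norm_num⟩
            have h := hβ.1 u (a * b) (t : T)
            rw [hβ.1 a b (t : T), ht1 t, ht2 t, one_mul, mul_one] at h
            rw [← h]
            exact ht ⟨u * (a * b), hw⟩
        exact Subtype.ext (hI (t : T) htT)
      -- cardinality decreases
      have haS : a ∉ S := by
        intro h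
        have := ((hSmem a).mp h).2
        rw [hba] at this
        exact neg_one_ne_one' this
      have hcard' : Fintype.card S ≤ n := by
        have hlt : Fintype.card S < Fintype.card T := by
          apply Fintype.card_lt_of_injective_of_notMem (fun s : S => (s : T))
            Subtype.coe_injective (b := a)
          rintro ⟨s, hs⟩
          exact haS (hs ▸ s.2)
        omega
      obtain ⟨m, a', b', hsymp', hgen'⟩ := ih S β' hcard' hβ' hI'
      -- extended families
      refine ⟨m + 1, Fin.cons a (fun i => (a' i : T)), Fin.cons b (fun i => (b' i : T)),
        ⟨?_, ?_, ?_, ?_⟩, ?_⟩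
      · intro i
        refine Fin.cases ?_ ?_ i
        · simpa using ⟨hab, hba⟩
        · intro j
          simpa using hsymp'.1 j
      · intro i j
        rcases Fin.eq_zero_or_eq_succ i with rfl | ⟨i', rfl⟩ <;>
          rcases Fin.eq_zero_or_eq_succ j with rfl | ⟨j', rfl⟩
        · simpa using haa
        · simpa using ht1 (a' j')
        · simpa using (beta_symm hβ _ _).trans (ht1 (a' i'))
        · simpa using hsymp'.2.1 i' j'
      · intro i j
        rcases Fin.eq_zero_or_eq_succ i with rfl | ⟨i', rfl⟩ <;>
          rcases Fin.eq_zero_or_eq_succ j with rfl | ⟨j', rfl⟩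
        · simpa using hbb
        · simpa using ht2 (b' j')
        · simpa using (beta_symm hβ _ _).trans (ht2 (b' i'))
        · simpa using hsymp'.2.2.1 i' j'
      · intro i j hij
        rcases Fin.eq_zero_or_eq_succ i with rfl | ⟨i', rfl⟩ <;>
          rcases Fin.eq_zero_or_eq_succ j with rfl | ⟨j', rfl⟩
        · exact absurd rfl hij
        · simpa using ⟨ht1 (b' j'), ht2 (a' j')⟩
        · simpa using ⟨(beta_symm hβ _ _).trans (ht2 (a' i')),
            (beta_symm hβ _ _).trans (ht1 (b' i'))⟩
        · have hij' : i' ≠ j' := fun h => hij (congrArg Fin.succ h)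
          simpa using hsymp'.2.2.2 i' j' hij'
      -- generation
      · intro t
        have main : ∀ (e1 e2 : ℕ), t * (a ^ e1 * b ^ e2) ∈ S →
            ∃ f g : Fin (m + 1) → ℕ,
              t = ∏ i, Fin.cons a (fun i => (a' i : T)) i ^ f i *
                Fin.cons b (fun i => (b' i : T)) i ^ g i := by
          intro e1 e2 hm
          obtain ⟨f, g, hfg⟩ := hgen' ⟨_, hm⟩
          refine ⟨Fin.cons e1 f, Fin.cons e2 g, ?_⟩
          rw [Fin.prod_univ_succ]
          simp only [Fin.cons_zero, Fin.cons_succ]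
          have hco : ((∏ i, a' i ^ f i * b' i ^ g i : S) : T)
              = ∏ i, (a' i : T) ^ f i * (b' i : T) ^ g i := by
            push_cast
            rfl
          have hfg' : t * (a ^ e1 * b ^ e2) = ∏ i, (a' i : T) ^ f i * (b' i : T) ^ g i := by
            rw [← hco]
            exact congrArg (Subtype.val) hfg
          rw [← hfg']
          apply aux_cancel
          rw [mul_mul_mul_comm, ← pow_add, ← pow_add, ← two_mul, ← two_mul,
            pow_mul, pow_mul, sq_one hβ hI a, sq_one hβ hI b, one_pow, one_pow, one_mul]
        rcases beta_pm hβ a t with h1 | h1 <;> rcases beta_pm hβ b t with h2 | h2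
        · refine main 0 0 ((hSmem _).mpr ?_)
          constructor <;> simp only [pow_zero, mul_one] <;> assumption
        · refine main 1 0 ((hSmem _).mpr ?_)
          simp only [pow_one, pow_zero, mul_one]
          exact ⟨by rw [hβ.2.1, h1, haa, one_mul], by rw [hβ.2.1, h2, hba]; norm_num⟩
        · refine main 0 1 ((hSmem _).mpr ?_)
          simp only [pow_one, pow_zero, one_mul]
          exact ⟨by rw [hβ.2.1, h1, hab]; norm_num, by rw [hβ.2.1, h2, hbb, one_mul]⟩
        · refine main 1 1 ((hSmem _).mpr ?_)
          simp only [pow_one]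
          rw [← mul_assoc]
          exact ⟨by rw [hβ.2.1, hβ.2.1, h1, haa, hab]; norm_num,
            by rw [hβ.2.1, hβ.2.1, h2, hba, hbb]; norm_num⟩

section Assembly
variable {T : Type*} [CommGroup T] {β : T → T → ℝˣ}

lemma beta_pow_right (hβ : IsAltBichar β) (u v : T) (k : ℕ) :
    β u (v ^ k) = (β u v) ^ k := by
  have := map_pow (chiR hβ u) v k
  simpa [chiR] using this

lemma beta_prod_right (hβ : IsAltBichar β) (u : T) {ι : Type*} (s : Finset ι) (F : ι → T) :
    β u (∏ i ∈ s, F i) = ∏ i ∈ s, β u (F i) := by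
  have := map_prod (chiR hβ u) F s
  simp only [chiR, MonoidHom.coe_mk, OneHom.coe_mk] at this
  exact this

lemma units_neg_pow_inj {p q : ℕ} (hp : p < 2) (hq : q < 2)
    (h : ((-1 : ℝˣ)) ^ p = (-1) ^ q) : p = q := by
  interval_cases p <;> interval_cases q <;> first
    | rfl
    | (exfalso
       have := congrArg Units.val h
       push_cast at this
       norm_num at this)

lemma pow_mod_two {t : T} (h : t ^ 2 = 1) (k : ℕ) : t ^ (k % 2) = t ^ k := by
  conv_rhs => rw [← Nat.mod_add_div k 2]
  rw [pow_add, pow_mul, h, one_pow, mul_one]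

lemma pair_b (hβ : IsAltBichar β) {m : ℕ} {a b : Fin m → T}
    (hs : IsSymplecticFamily β a b) (j : Fin m) (f g : Fin m → ℕ) :
    β (b j) (∏ i, a i ^ f i * b i ^ g i) = (-1) ^ f j := by
  rw [beta_prod_right hβ]
  rw [Finset.prod_eq_single j]
  · rw [hβ.2.1, beta_pow_right hβ, beta_pow_right hβ, (hs.1 j).2, hs.2.2.1 j j,
      one_pow, mul_one]
  · intro i _ hij
    rw [hβ.2.1, beta_pow_right hβ, beta_pow_right hβ, (hs.2.2.2 j i (Ne.symm hij)).2,
      hs.2.2.1 j i, one_pow, one_pow, mul_one]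
  · intro h
    exact absurd (Finset.mem_univ j) h

lemma pair_a (hβ : IsAltBichar β) {m : ℕ} {a b : Fin m → T}
    (hs : IsSymplecticFamily β a b) (j : Fin m) (f g : Fin m → ℕ) :
    β (a j) (∏ i, a i ^ f i * b i ^ g i) = (-1) ^ g j := by
  rw [beta_prod_right hβ]
  rw [Finset.prod_eq_single j]
  · rw [hβ.2.1, beta_pow_right hβ, beta_pow_right hβ, (hs.1 j).1, hs.2.1 j j,
      one_pow, one_mul]
  · intro i _ hij
    rw [hβ.2.1, beta_pow_right hβ, beta_pow_right hβ, (hs.2.2.2 j i (Ne.symm hij)).1,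
      hs.2.1 j i, one_pow, one_pow, mul_one]
  · intro h
    exact absurd (Finset.mem_univ j) h

lemma mem_zpowers_sq {g x : T} (hx : x ∈ Subgroup.zpowers g) (hg : g ^ 2 = 1) :
    x = 1 ∨ x = g := by
  obtain ⟨k, hk⟩ := Subgroup.mem_zpowers_iff.mp hx
  rcases Int.even_or_odd k with ⟨c, hc⟩ | ⟨c, hc⟩
  · left
    rw [← hk, hc, ← two_mul, zpow_mul]
    norm_cast
    rw [hg, one_zpow]
  · right
    rw [← hk, hc, zpow_add, zpow_one, zpow_mul]
    norm_cast
    rw [hg, one_zpow, one_mul]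

end Assembly

/-- If `β` is an alternating bicharacter of type I on a finite abelian group `T`, then
`T ≅ (ℤ₂ × ℤ₂)^m` for some `m ≥ 0` and there is a symplectic basis of `T`. -/
theorem stmt3 {T : Type*} [CommGroup T] [Fintype T]
    (β : T → T → ℝˣ) (hβ : IsAltBichar β)
    (hI : ∀ t : T, (∀ u : T, β u t = 1) → t = 1) :
    ∃ m : ℕ, Nonempty (T ≃* Multiplicative (Fin m → ZMod 2 × ZMod 2)) ∧
      ∃ a b : Fin m → T, IsSymplecticFamily β a b ∧
        IsBasisFamily (fun p : Fin m × Bool => if p.2 then b p.1 else a p.1) := by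
  classical
  obtain ⟨m, a, b, hs, hgen⟩ := key (Fintype.card T) T β le_rfl hβ hI
  have h2 : ∀ t : T, t ^ 2 = 1 := sq_one hβ hI
  set c : Fin m × Bool → T := fun p => if p.2 then b p.1 else a p.1 with hc
  have hc2 : ∀ p, c p ^ 2 = 1 := fun p => h2 _
  have hcfalse : ∀ i, c (i, false) = a i := fun i => rfl
  have hctrue : ∀ i, c (i, true) = b i := fun i => rfl
  have hpairF : ∀ (z : ∀ p, Subgroup.zpowers (c p)) (j : Fin m),
      β (b j) (∏ p, (z p : T)) = β (b j) (z (j, false) : T) := by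
    intro z j
    rw [beta_prod_right hβ]
    refine Finset.prod_eq_single (j, false) ?_ ?_
    · rintro ⟨i, bb⟩ _ hne
      rcases mem_zpowers_sq (z (i, bb)).2 (hc2 (i, bb)) with h | h
      · rw [h]; exact beta_one_right hβ _
      · rw [h]
        cases bb
        · rw [hcfalse]
          have hij : j ≠ i := fun he => hne (by rw [he])
          exact (hs.2.2.2 j i hij).2
        · rw [hctrue]
          exact hs.2.2.1 j i
    · intro h; exact absurd (Finset.mem_univ _) h
  have hpairT : ∀ (z : ∀ p, Subgroup.zpowers (c p)) (j : Fin m),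
      β (a j) (∏ p, (z p : T)) = β (a j) (z (j, true) : T) := by
    intro z j
    rw [beta_prod_right hβ]
    refine Finset.prod_eq_single (j, true) ?_ ?_
    · rintro ⟨i, bb⟩ _ hne
      rcases mem_zpowers_sq (z (i, bb)).2 (hc2 (i, bb)) with h | h
      · rw [h]; exact beta_one_right hβ _
      · rw [h]
        cases bb
        · rw [hcfalse]
          exact hs.2.1 j i
        · rw [hctrue]
          have hij : j ≠ i := fun he => hne (by rw [he])
          exact (hs.2.2.2 j i hij).1
    · intro h; exact absurd (Finset.mem_univ _) h
  have hinj : Function.Injective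
      (fun z : (∀ p, Subgroup.zpowers (c p)) => ∏ p, (z p : T)) := by
    intro x y hxy
    simp only at hxy
    funext p
    rcases p with ⟨j, bb⟩
    apply Subtype.ext
    cases bb
    · have hx := hpairF x j
      have hy := hpairF y j
      rw [hxy] at hx
      have heq : β (b j) (x (j, false) : T) = β (b j) (y (j, false) : T) :=
        hx.symm.trans hy
      rcases mem_zpowers_sq (x (j, false)).2 (hc2 _) with hx1 | hx1 <;>
        rcases mem_zpowers_sq (y (j, false)).2 (hc2 _) with hy1 | hy1 <;>
        rw [hx1, hy1]
      · exfalso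
        rw [hx1, hy1, beta_one_right hβ, hcfalse, (hs.1 j).2] at heq
        first
          | exact neg_one_ne_one' heq
          | exact neg_one_ne_one' heq.symm
      · exfalso
        rw [hx1, hy1, beta_one_right hβ, hcfalse, (hs.1 j).2] at heq
        first
          | exact neg_one_ne_one' heq
          | exact neg_one_ne_one' heq.symm
    · have hx := hpairT x j
      have hy := hpairT y j
      rw [hxy] at hx
      have heq : β (a j) (x (j, true) : T) = β (a j) (y (j, true) : T) :=
        hx.symm.trans hy
      rcases mem_zpowers_sq (x (j, true)).2 (hc2 _) with hx1 | hx1 <;>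
        rcases mem_zpowers_sq (y (j, true)).2 (hc2 _) with hy1 | hy1 <;>
        rw [hx1, hy1]
      · exfalso
        rw [hx1, hy1, beta_one_right hβ, hctrue, (hs.1 j).1] at heq
        first
          | exact neg_one_ne_one' heq
          | exact neg_one_ne_one' heq.symm
      · exfalso
        rw [hx1, hy1, beta_one_right hβ, hctrue, (hs.1 j).1] at heq
        first
          | exact neg_one_ne_one' heq
          | exact neg_one_ne_one' heq.symm
  have hsurj : Function.Surjective
      (fun z : (∀ p, Subgroup.zpowers (c p)) => ∏ p, (z p : T)) := by
    intro t
    obtain ⟨f, g, hfg⟩ := hgen t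
    refine ⟨fun p => ⟨c p ^ (if p.2 then g p.1 else f p.1),
      Subgroup.npow_mem_zpowers _ _⟩, ?_⟩
    show (∏ p : Fin m × Bool, c p ^ (if p.2 then g p.1 else f p.1)) = t
    rw [Fintype.prod_prod_type]
    have hrow : ∀ i : Fin m,
        (∏ bb : Bool, c (i, bb) ^ (if bb then g i else f i)) = a i ^ f i * b i ^ g i := by
      intro i
      rw [Fintype.prod_bool]
      show b i ^ g i * a i ^ f i = a i ^ f i * b i ^ g i
      exact mul_comm _ _
    rw [Finset.prod_congr rfl (fun i _ => hrow i), ← hfg]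
  have hval_pow : ∀ (t : T) (x y : ZMod 2), t ^ 2 = 1 →
      t ^ (x + y).val = t ^ x.val * t ^ y.val := by
    intro t x y ht
    rw [ZMod.val_add, pow_mod_two ht, pow_add]
  let φ : Multiplicative (Fin m → ZMod 2 × ZMod 2) →* T :=
    { toFun := fun F => ∏ i, a i ^ ((Multiplicative.toAdd F) i).1.val *
        b i ^ ((Multiplicative.toAdd F) i).2.val
      map_one' := by
        simp [toAdd_one, Pi.zero_apply, Prod.fst_zero, Prod.snd_zero, ZMod.val_zero]
      map_mul' := by
        intro F G
        simp only [toAdd_mul, Pi.add_apply, Prod.fst_add, Prod.snd_add]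
        rw [← Finset.prod_mul_distrib]
        refine Finset.prod_congr rfl fun i _ => ?_
        rw [hval_pow _ _ _ (h2 (a i)), hval_pow _ _ _ (h2 (b i)), mul_mul_mul_comm] }
  have hφbij : Function.Bijective φ := by
    constructor
    · intro F G h
      simp only [φ, MonoidHom.coe_mk, OneHom.coe_mk] at h
      apply Multiplicative.toAdd.injective
      funext j
      have hbF := pair_b hβ hs j (fun i => ((Multiplicative.toAdd F) i).1.val)
        (fun i => ((Multiplicative.toAdd F) i).2.val)
      have hbG := pair_b hβ hs j (fun i => ((Multiplicative.toAdd G) i).1.val)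
        (fun i => ((Multiplicative.toAdd G) i).2.val)
      have haF := pair_a hβ hs j (fun i => ((Multiplicative.toAdd F) i).1.val)
        (fun i => ((Multiplicative.toAdd F) i).2.val)
      have haG := pair_a hβ hs j (fun i => ((Multiplicative.toAdd G) i).1.val)
        (fun i => ((Multiplicative.toAdd G) i).2.val)
      rw [h] at hbF haF
      have e1 : (Multiplicative.toAdd F j).1.val = (Multiplicative.toAdd G j).1.val :=
        units_neg_pow_inj (ZMod.val_lt _) (ZMod.val_lt _) (hbF.symm.trans hbG)
      have e2 : (Multiplicative.toAdd F j).2.val = (Multiplicative.toAdd G j).2.val :=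
        units_neg_pow_inj (ZMod.val_lt _) (ZMod.val_lt _) (haF.symm.trans haG)
      exact Prod.ext (ZMod.val_injective 2 e1) (ZMod.val_injective 2 e2)
    · intro t
      obtain ⟨f, g, hfg⟩ := hgen t
      refine ⟨Multiplicative.ofAdd (fun i => ((f i : ZMod 2), (g i : ZMod 2))), ?_⟩
      simp only [φ, MonoidHom.coe_mk, OneHom.coe_mk, toAdd_ofAdd]
      rw [hfg]
      refine Finset.prod_congr rfl fun i _ => ?_
      rw [ZMod.val_natCast, ZMod.val_natCast, pow_mod_two (h2 (a i)),
        pow_mod_two (h2 (b i))]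
  exact ⟨m, ⟨(MulEquiv.ofBijective φ hφbij).symm⟩, a, b, hs, ⟨hinj, hsurj⟩⟩
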